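/- Let ε₁ ≤ … ≤ ε_{k+1} be positive reals and define r₁ = ε₁ and r_{m+1} = min{ε_{m+1}, (Σ_{i=1}^m rᵢ² + 8)/(Σ_{i=1}^m rᵢ)} for 1 ≤ m ≤ k. Write f(r₁ᵐ) = (Σ_{i=1}^m rᵢ² + 8)/(4 (Σ_{i=1}^m rᵢ)²) and H(ε₁ᵐ) = max_{0 ≤ i ≤ m} 1/((Σ_{j=1}^i ε_j)² + m − i). If saturation occurs at index k+1, i.e. r_{k+1} = (Σ_{i=1}^k rᵢ² + 8)/(Σ_{i=1}^k rᵢ), and H(ε₁ᵏ) ≥ f(r₁ᵏ)/443, then H(ε₁^{k+1}) ≥ f(r₁^{k+1})/443. -/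

import Mathlib

/-- Lemma rec: With `ε` nondecreasing positive on indices `0..k` and the
ADPM weights `r` (0-indexed), if saturation occurs at (0-indexed) index `k`, i.e.
`r k = ((∑_{i<k} r i ^ 2) + 8) / (∑_{i<k} r i)`, and `H(ε₁ᵏ) ≥ f(r₁ᵏ)/443`, then
`H(ε₁^{k+1}) ≥ f(r₁^{k+1})/443`, where `f(r₁ᵐ) = ((∑_{i<m} r i²) + 8)/(4 (∑_{i<m} r i)²)`
and `H(ε₁ᵐ) = max_{0 ≤ i ≤ m} 1/((∑_{j<i} ε j)² + (m - i))`. -/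
theorem saturated_step (k : ℕ) (hk : 1 ≤ k) (ε r : ℕ → ℝ)
    (hpos : ∀ i ≤ k, 0 < ε i)
    (hmono : ∀ i j : ℕ, i ≤ j → j ≤ k → ε i ≤ ε j)
    (hr0 : r 0 = ε 0)
    (hrec : ∀ m : ℕ, m + 1 ≤ k → r (m + 1) = min (ε (m + 1))
      (((∑ i ∈ Finset.range (m + 1), (r i) ^ 2) + 8) / (∑ i ∈ Finset.range (m + 1), r i)))
    (hsat : r k = ((∑ i ∈ Finset.range k, (r i) ^ 2) + 8) / (∑ i ∈ Finset.range k, r i))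
    (hH : (((∑ i ∈ Finset.range k, (r i) ^ 2) + 8)
            / (4 * (∑ i ∈ Finset.range k, r i) ^ 2)) / 443
          ≤ (Finset.range (k + 1)).sup' Finset.nonempty_range_add_one
              (fun i => 1 / ((∑ j ∈ Finset.range i, ε j) ^ 2 + ((k - i : ℕ) : ℝ)))) :
    (((∑ i ∈ Finset.range (k + 1), (r i) ^ 2) + 8)
        / (4 * (∑ i ∈ Finset.range (k + 1), r i) ^ 2)) / 443
      ≤ (Finset.range (k + 2)).sup' Finset.nonempty_range_add_one
          (fun i => 1 / ((∑ j ∈ Finset.range i, ε j) ^ 2 + ((k + 1 - i : ℕ) : ℝ))) := by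
  -- positivity of the weights
  have hrpos : ∀ i, i ≤ k → 0 < r i := by
    intro i
    induction i using Nat.strong_induction_on with
    | _ i ih =>
      intro hi
      match i with
      | 0 => rw [hr0]; exact hpos 0 (Nat.zero_le k)
      | m + 1 =>
        rw [hrec m hi]
        have hS : 0 < ∑ j ∈ Finset.range (m + 1), r j :=
          Finset.sum_pos (fun j hj => ih j (Finset.mem_range.mp hj)
            (le_trans (Nat.le_of_lt_succ (Finset.mem_range.mp hj)) (by omega)))
            Finset.nonempty_range_add_one
        have hQ : 0 ≤ ∑ j ∈ Finset.range (m + 1), (r j) ^ 2 :=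
          Finset.sum_nonneg fun j _ => sq_nonneg _
        exact lt_min (hpos _ hi) (div_pos (by linarith) hS)
  have hSpos : 0 < ∑ i ∈ Finset.range k, r i :=
    Finset.sum_pos (fun i hi => hrpos i (le_of_lt (Finset.mem_range.mp hi)))
      (Finset.nonempty_range_iff.mpr (by omega))
  have hQnn : 0 ≤ ∑ i ∈ Finset.range k, (r i) ^ 2 :=
    Finset.sum_nonneg fun i _ => sq_nonneg _
  rw [Finset.sum_range_succ, Finset.sum_range_succ, hsat]
  set S := ∑ i ∈ Finset.range k, r i with hSdef
  set Q := ∑ i ∈ Finset.range k, (r i) ^ 2 with hQdef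
  -- extract a maximizer of the old H
  obtain ⟨i0, hi0mem, hi0⟩ := Finset.exists_mem_eq_sup' (Finset.nonempty_range_add_one (n := k))
    (fun i => 1 / ((∑ j ∈ Finset.range i, ε j) ^ 2 + ((k - i : ℕ) : ℝ)))
  rw [hi0] at hH
  have hi0k : i0 ≤ k := Nat.lt_succ_iff.mp (Finset.mem_range.mp hi0mem)
  set D := (∑ j ∈ Finset.range i0, ε j) ^ 2 with hDdef
  have hDnn : 0 ≤ D := sq_nonneg _
  set c : ℝ := ((k - i0 : ℕ) : ℝ) with hcdef
  have hcnn : 0 ≤ c := Nat.cast_nonneg _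
  have ha : 0 < D + c := by
    rcases eq_or_lt_of_le hi0k with h | h
    · have hsum : 0 < ∑ j ∈ Finset.range i0, ε j :=
        Finset.sum_pos (fun j hj => hpos j (by
          have := Finset.mem_range.mp hj; omega))
          (Finset.nonempty_range_iff.mpr (by omega))
      have : 0 < D := pow_pos hsum 2
      linarith
    · have h1 : (1 : ℝ) ≤ c := by
        rw [hcdef]
        exact_mod_cast Nat.one_le_iff_ne_zero.mpr (by omega)
      linarith
  -- from hH: (Q+8)*(D+c) ≤ 1772*S^2
  rw [div_div, div_le_div_iff₀ (by positivity) ha] at hH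
  have hPa : (Q + 8) * (D + c) ≤ 1772 * S ^ 2 := by nlinarith [hH]
  have key : (Q + 8) * (D + c + 1) ≤ 1772 * (S ^ 2 + (Q + 8)) := by nlinarith [hPa]
  -- move to the i0 term of the new H
  refine le_trans ?_ (Finset.le_sup'
    (fun i => 1 / ((∑ j ∈ Finset.range i, ε j) ^ 2 + ((k + 1 - i : ℕ) : ℝ)))
    (Finset.mem_range.mpr (show i0 < k + 2 by omega)))
  have hcast : ((k + 1 - i0 : ℕ) : ℝ) = c + 1 := by
    rw [hcdef]
    have : k + 1 - i0 = (k - i0) + 1 := by omega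
    rw [this]; push_cast; ring
  simp only [hcast]
  have hSne : S ≠ 0 := ne_of_gt hSpos
  have hP : (0 : ℝ) < Q + 8 := by linarith
  have hSP : (0 : ℝ) < S ^ 2 + (Q + 8) := by positivity
  have hSPne : S ^ 2 + (Q + 8) ≠ 0 := ne_of_gt hSP
  have hX : 0 < S + (Q + 8) / S := add_pos hSpos (div_pos hP hSpos)
  have hrw : (Q + ((Q + 8) / S) ^ 2 + 8) / (4 * (S + (Q + 8) / S) ^ 2)
      = (Q + 8) / (4 * (S ^ 2 + (Q + 8))) := by
    field_simp
    ring
  rw [hrw, div_div, div_le_div_iff₀ (by positivity) (by linarith : (0:ℝ) < D + (c + 1))]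
  nlinarith [key]
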